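/- Let k ≥ 2 be an integer and let F(z) ∈ ℂ[[z]] be a k-Mahler function. If F extends to an entire function on ℂ, then F is a polynomial. -/

import Mathlib

open Metric Filter Complex

section Aux

lemma entire_poly_of_growth {f : ℂ → ℂ} (hf : Differentiable ℂ f)
    {B : ℝ} {M : ℕ} {R : ℕ → ℝ} (hR1 : ∀ m, 1 ≤ R m)
    (hRtop : Filter.Tendsto R Filter.atTop Filter.atTop)
    (hbound : ∀ m, ∀ w : ℂ, ‖w‖ ≤ R m → ‖f w‖ ≤ B * R m ^ M) :
    ∃ P : Polynomial ℂ, ∀ z : ℂ, f z = P.eval z := by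
  obtain ⟨p, hp⟩ : ∃ p, HasFPowerSeriesOnBall f p 0 ⊤ :=
    ⟨_, hf.hasFPowerSeriesOnBall 0 (R := 1) one_pos⟩
  have hBnn : 0 ≤ B := by
    have := hbound 0 0 (by simpa using (zero_le_one.trans (hR1 0)))
    have h2 : (0:ℝ) ≤ B * R 0 ^ M := le_trans (norm_nonneg _) this
    nlinarith [pow_pos (lt_of_lt_of_le one_pos (hR1 0)) M, norm_nonneg (f 0)]
  have hcoeff : ∀ n, M < n → p.coeff n = 0 := by
    intro n hn
    have hnorm : ∀ m, ‖p n‖ ≤ B / R m := by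
      intro m
      have hRpos : (0:ℝ) < R m := lt_of_lt_of_le one_pos (hR1 m)
      set Rm : NNReal := ⟨R m, hRpos.le⟩ with hRm
      have hp' : HasFPowerSeriesOnBall f (cauchyPowerSeries f 0 Rm) 0 ⊤ :=
        hf.hasFPowerSeriesOnBall 0 (by exact_mod_cast hRpos)
      have hpq : p = cauchyPowerSeries f 0 Rm :=
        hp.hasFPowerSeriesAt.eq_formalMultilinearSeries hp'.hasFPowerSeriesAt
      have hb := norm_cauchyPowerSeries_le f 0 (Rm : ℝ) n
      rw [← hpq] at hb
      have hcoe : (Rm : ℝ) = R m := rfl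
      rw [hcoe] at hb
      have hint : (∫ θ : ℝ in (0:ℝ)..2 * Real.pi, ‖f (circleMap 0 (R m) θ)‖)
          ≤ 2 * Real.pi * (B * R m ^ M) := by
        have := intervalIntegral.integral_mono_on (a := (0:ℝ)) (b := 2 * Real.pi)
          Real.two_pi_pos.le
          (Continuous.intervalIntegrable (by
            exact (hf.continuous.comp (continuous_circleMap 0 (R m))).norm) _ _)
          (intervalIntegrable_const (μ := MeasureTheory.volume) (c := B * R m ^ M))
          (fun θ _ => hbound m (circleMap 0 (R m) θ)
            (by rw [norm_circleMap_zero, abs_of_pos hRpos]))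
        simp only [intervalIntegral.integral_const, smul_eq_mul, sub_zero] at this
        linarith
      have habs : |R m| = R m := abs_of_pos hRpos
      rw [habs] at hb
      calc ‖p n‖ ≤ ((2 * Real.pi)⁻¹ * ∫ θ : ℝ in (0:ℝ)..2 * Real.pi,
              ‖f (circleMap 0 (R m) θ)‖) * (R m)⁻¹ ^ n := hb
        _ ≤ ((2 * Real.pi)⁻¹ * (2 * Real.pi * (B * R m ^ M))) * (R m)⁻¹ ^ n := by
            gcongr
        _ = B * (R m ^ M * ((R m)⁻¹) ^ n) := by
            field_simp
        _ ≤ B * (R m)⁻¹ := by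
            gcongr B * ?_
            have key : R m ^ M * R m ≤ R m ^ n := by
              rw [← pow_succ]; exact pow_le_pow_right₀ (hR1 m) hn
            rw [inv_pow, ← div_eq_mul_inv, div_le_iff₀ (pow_pos hRpos n),
              inv_mul_eq_div, le_div_iff₀ hRpos]
            exact key
        _ = B / R m := by rw [div_eq_mul_inv]
    have hlim : Tendsto (fun m => B / R m) atTop (nhds 0) :=
      Filter.Tendsto.div_atTop tendsto_const_nhds hRtop
    have h0 : ‖p n‖ ≤ 0 := ge_of_tendsto hlim (Filter.Eventually.of_forall hnorm)
    have hpn : p n = 0 := by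
      rwa [norm_le_zero_iff] at h0
    simp [FormalMultilinearSeries.coeff, hpn]
  refine ⟨∑ n ∈ Finset.range (M + 1), Polynomial.C (p.coeff n) * Polynomial.X ^ n, fun z => ?_⟩
  have hsum : HasSum (fun n : ℕ => z ^ n • p.coeff n) (f z) := by
    have := hp.hasSum (y := z) (by simp)
    simp only [FormalMultilinearSeries.apply_eq_pow_smul_coeff, zero_add] at this
    exact this
  have : f z = ∑' n : ℕ, z ^ n • p.coeff n := hsum.tsum_eq.symm
  rw [this, tsum_eq_sum (s := Finset.range (M + 1))
    (fun n hn => by rw [hcoeff n (by simpa using hn)]; simp)]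
  rw [Polynomial.eval_finset_sum]
  exact Finset.sum_congr rfl (fun n _ => by
    rw [Polynomial.eval_mul, Polynomial.eval_C, Polynomial.eval_pow, Polynomial.eval_X,
      smul_eq_mul, mul_comm])

lemma poly_eval_le {p : Polynomial ℂ} {z : ℂ} (hz : 1 ≤ ‖z‖) {N : ℕ} (hN : p.natDegree ≤ N) :
    ‖p.eval z‖ ≤ (∑ i ∈ Finset.range (p.natDegree + 1), ‖p.coeff i‖) * ‖z‖ ^ N := by
  rw [Polynomial.eval_eq_sum_range]
  calc ‖∑ i ∈ Finset.range (p.natDegree + 1), p.coeff i * z ^ i‖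
      ≤ ∑ i ∈ Finset.range (p.natDegree + 1), ‖p.coeff i * z ^ i‖ := norm_sum_le _ _
    _ ≤ ∑ i ∈ Finset.range (p.natDegree + 1), ‖p.coeff i‖ * ‖z‖ ^ N := by
        apply Finset.sum_le_sum
        intro i hi
        rw [norm_mul, norm_pow]
        have : i ≤ N := le_trans (Nat.lt_succ_iff.mp (Finset.mem_range.mp hi)) hN
        exact mul_le_mul_of_nonneg_left (pow_le_pow_right₀ hz this) (norm_nonneg _)
    _ = (∑ i ∈ Finset.range (p.natDegree + 1), ‖p.coeff i‖) * ‖z‖ ^ N :=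
        (Finset.sum_mul _ _ _).symm

lemma poly_eval_lb {p : Polynomial ℂ} (hp : p ≠ 0) :
    ∃ c r₀ : ℝ, 0 < c ∧ 1 ≤ r₀ ∧ ∀ z : ℂ, r₀ ≤ ‖z‖ → c ≤ ‖p.eval z‖ := by
  by_cases hdeg : 0 < p.degree
  · have ht : Tendsto (fun z : ℂ => ‖p.eval z‖) (Bornology.cobounded ℂ) atTop := by
      have := Polynomial.tendsto_norm_atTop p hdeg
        (z := fun z : ℂ => z) (l := Bornology.cobounded ℂ) tendsto_norm_cobounded_atTop
      exact this
    have hev : ∀ᶠ z : ℂ in Bornology.cobounded ℂ, 1 ≤ ‖p.eval z‖ := ht.eventually_ge_atTop 1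
    rw [← comap_norm_atTop, Filter.eventually_comap] at hev
    rw [Filter.eventually_atTop] at hev
    obtain ⟨r₀, hr₀⟩ := hev
    refine ⟨1, max r₀ 1, one_pos, le_max_right _ _, fun z hz => ?_⟩
    exact hr₀ ‖z‖ (le_trans (le_max_left _ _) hz) z rfl
  · have h0 : p.natDegree = 0 := by
      rw [Polynomial.natDegree_eq_zero_iff_degree_le_zero]
      exact le_of_not_gt hdeg
    obtain ⟨c, rfl⟩ := Polynomial.natDegree_eq_zero.mp h0
    have hc : c ≠ 0 := by simpa using hp
    refine ⟨‖c‖, 1, norm_pos_iff.mpr hc, le_refl _, fun z _ => ?_⟩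
    simp

end Aux

set_option maxHeartbeats 1600000 in
theorem kMahler_entire_is_polynomial
    (k : ℕ) (hk : 2 ≤ k) (d : ℕ) (a : ℕ → Polynomial ℂ) (ha : a 0 * a d ≠ 0)
    (f : ℂ → ℂ) (hf : Differentiable ℂ f)
    (heq : ∃ r : ℝ, 0 < r ∧ ∀ z ∈ ball (0 : ℂ) r,
      ∑ j ∈ Finset.range (d + 1), (a j).eval z * f (z ^ k ^ j) = 0) :
    ∃ P : Polynomial ℂ, ∀ z : ℂ, f z = P.eval z := by
  have had : a d ≠ 0 := right_ne_zero_of_mul ha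
  have hk1 : (1 : ℕ) < k := hk
  -- Step 1: the functional equation holds on all of ℂ by the identity theorem.
  obtain ⟨r, hrpos, hzero⟩ := heq
  have hGdiff : Differentiable ℂ
      (fun z : ℂ => ∑ j ∈ Finset.range (d + 1), (a j).eval z * f (z ^ k ^ j)) := by
    apply Differentiable.fun_sum
    intro j _
    exact ((a j).differentiable).mul (hf.comp (differentiable_pow (k ^ j)))
  have hG : ∀ z : ℂ, ∑ j ∈ Finset.range (d + 1), (a j).eval z * f (z ^ k ^ j) = 0 := by
    have hana : AnalyticOnNhd ℂ
        (fun z : ℂ => ∑ j ∈ Finset.range (d + 1), (a j).eval z * f (z ^ k ^ j)) Set.univ :=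
      fun z _ => hGdiff.analyticAt z
    have hev : (fun z : ℂ => ∑ j ∈ Finset.range (d + 1), (a j).eval z * f (z ^ k ^ j))
        =ᶠ[nhds (0 : ℂ)] 0 :=
      Filter.eventuallyEq_of_mem (ball_mem_nhds (0 : ℂ) hrpos) hzero
    have := hana.eqOn_zero_of_preconnected_of_eventuallyEq_zero
      isPreconnected_univ (Set.mem_univ 0) hev
    intro z
    exact this (Set.mem_univ z)
  -- Case d = 0.
  rcases Nat.eq_zero_or_pos d with hd0 | hdpos
  · subst hd0
    have ha0 : a 0 ≠ 0 := left_ne_zero_of_mul ha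
    have hzf : ∀ z : ℂ, (a 0).eval z * f z = 0 := by
      intro z
      have := hG z
      simpa using this
    have hdense : Dense {z : ℂ | ¬ (a 0).IsRoot z} := by
      have hfin : Set.Finite {z : ℂ | (a 0).IsRoot z} := (a 0).finite_setOf_isRoot ha0
      have := hfin.countable.dense_compl ℂ
      simpa [Set.compl_setOf] using this
    have hf0 : ∀ z : ℂ, f z = 0 := by
      have : Set.EqOn f 0 (closure {z : ℂ | ¬ (a 0).IsRoot z}) := by
        apply Set.EqOn.closure _ hf.continuous continuous_const
        intro z hz
        have h1 := hzf z
        have h2 : (a 0).eval z ≠ 0 := hz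
        have := mul_eq_zero.mp h1
        tauto
      intro z
      exact this (hdense z)
    exact ⟨0, fun z => by simp [hf0 z]⟩
  -- Case d ≥ 1.
  · obtain ⟨c, r₀, hc, hr₀1, hlb⟩ := poly_eval_lb had
    set N := (Finset.range (d + 1)).sup (fun j => (a j).natDegree) with hN_def
    set Csum := ∑ j ∈ Finset.range (d + 1),
      ∑ i ∈ Finset.range ((a j).natDegree + 1), ‖(a j).coeff i‖ with hCsum_def
    have hCsum_nonneg : 0 ≤ Csum :=
      Finset.sum_nonneg fun j _ => Finset.sum_nonneg fun i _ => norm_nonneg _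
    have hup : ∀ j ∈ Finset.range (d + 1), ∀ z : ℂ, 1 ≤ ‖z‖ →
        ‖(a j).eval z‖ ≤ Csum * ‖z‖ ^ N := by
      intro j hj z hz
      refine (poly_eval_le hz (Finset.le_sup (f := fun j => (a j).natDegree) hj)).trans ?_
      apply mul_le_mul_of_nonneg_right _ (pow_nonneg (norm_nonneg z) N)
      exact Finset.single_le_sum
        (f := fun j => ∑ i ∈ Finset.range ((a j).natDegree + 1), ‖(a j).coeff i‖)
        (fun j _ => Finset.sum_nonneg fun i _ => norm_nonneg _) hj
    set K₁ := max ((d : ℝ) * Csum / c) 1 with hK₁_def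
    have hK₁1 : (1:ℝ) ≤ K₁ := le_max_right _ _
    set K' := 2 * K₁ with hK'_def
    have hK'1 : (1:ℝ) ≤ K' := by simp only [hK'_def]; nlinarith
    have hK'0 : (0:ℝ) ≤ K' := by linarith
    set s₀ := max (max (r₀ ^ k ^ d) K') 2 with hs₀_def
    have hs₀2 : (2:ℝ) ≤ s₀ := le_max_right _ _
    have hs₀1 : (1:ℝ) ≤ s₀ := by linarith
    have hs₀r : r₀ ^ k ^ d ≤ s₀ := le_trans (le_max_left _ _) (le_max_left _ _)
    have hs₀K : K' ≤ s₀ := le_trans (le_max_right _ _) (le_max_left _ _)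
    set A : ℝ → ℝ := fun t => sSup ((fun z : ℂ => ‖f z‖) '' Metric.closedBall 0 t) with hA_def
    have hA_le : ∀ t : ℝ, ∀ w : ℂ, ‖w‖ ≤ t → ‖f w‖ ≤ A t := by
      intro t w hw
      apply le_csSup
      · exact (isCompact_closedBall (0:ℂ) t).bddAbove_image (hf.continuous.norm.continuousOn)
      · exact ⟨w, by simpa [Metric.mem_closedBall, dist_zero_right] using hw, rfl⟩
    have hA_ub : ∀ t X : ℝ, 0 ≤ t → (∀ w : ℂ, ‖w‖ ≤ t → ‖f w‖ ≤ X) → A t ≤ X := by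
      intro t X ht hX
      apply csSup_le
      · exact ⟨‖f 0‖, ⟨0, by simpa using ht, rfl⟩⟩
      · rintro x ⟨w, hw, rfl⟩
        exact hX w (by simpa [Metric.mem_closedBall, dist_zero_right] using hw)
    have hA_nonneg : ∀ t : ℝ, 0 ≤ t → 0 ≤ A t := fun t ht =>
      le_trans (norm_nonneg (f 0)) (hA_le t 0 (by simpa using ht))
    have hkd0 : k ^ d ≠ 0 := pow_ne_zero _ (by omega)
    -- the key recursive estimate
    have hstep : ∀ n : ℕ,
        A (s₀ ^ k ^ (d + n)) + 1 ≤
          K' * (s₀ ^ k ^ (d + n)) ^ N * (A (s₀ ^ k ^ (d - 1 + n)) + 1) := by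
      intro n
      set u := s₀ ^ k ^ n with hu_def
      set t' := s₀ ^ k ^ (d - 1 + n) with ht'_def
      set t := s₀ ^ k ^ (d + n) with ht_def
      have hu1 : 1 ≤ u := one_le_pow₀ hs₀1
      have ht1 : 1 ≤ t := one_le_pow₀ hs₀1
      have ht'1 : 1 ≤ t' := one_le_pow₀ hs₀1
      have htu : t = u ^ k ^ d := by
        rw [ht_def, hu_def, ← pow_mul, ← pow_add, Nat.add_comm n d]
      have ht'u : t' = u ^ k ^ (d - 1) := by
        rw [ht'_def, hu_def, ← pow_mul, ← pow_add, Nat.add_comm n (d - 1)]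
      have hs₀t' : s₀ ≤ t' := le_self_pow₀ hs₀1 (pow_ne_zero _ (by omega))
      have hkey : ∀ w : ℂ, ‖w‖ ≤ t → ‖f w‖ ≤ K₁ * t ^ N * (A t' + 1) := by
        intro w hw
        have hAt' : 0 ≤ A t' := hA_nonneg _ (by linarith)
        have htN : 1 ≤ t ^ N := one_le_pow₀ ht1
        by_cases hws : ‖w‖ ≤ s₀
        · have h1 : ‖f w‖ ≤ A t' := hA_le _ _ (hws.trans hs₀t')
          have hKt : 1 ≤ K₁ * t ^ N := by nlinarith
          nlinarith [mul_le_mul_of_nonneg_right hKt (by linarith : (0:ℝ) ≤ A t' + 1)]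
        · push_neg at hws
          obtain ⟨z, hz⟩ := IsAlgClosed.exists_pow_nat_eq w (n := k ^ d) (by positivity)
          have hzw : ‖z‖ ^ k ^ d = ‖w‖ := by rw [← norm_pow, hz]
          have hzr₀ : r₀ ≤ ‖z‖ := by
            apply le_of_pow_le_pow_left₀ hkd0 (norm_nonneg z)
            rw [hzw]; exact hs₀r.trans hws.le
          have hz1 : 1 ≤ ‖z‖ := hr₀1.trans hzr₀
          have hzu : ‖z‖ ≤ u := by
            apply le_of_pow_le_pow_left₀ hkd0 (by linarith : (0:ℝ) ≤ u)
            rw [hzw, ← htu]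
            exact hw
          have hfj : ∀ j ∈ Finset.range d, ‖f (z ^ k ^ j)‖ ≤ A t' := by
            intro j hj
            have hjd : j < d := Finset.mem_range.mp hj
            apply hA_le
            rw [norm_pow]
            calc ‖z‖ ^ k ^ j ≤ ‖z‖ ^ k ^ (d - 1) :=
                pow_le_pow_right₀ hz1
                  (Nat.pow_le_pow_right (by omega)
                    (by omega : j ≤ d - 1))
              _ ≤ u ^ k ^ (d - 1) := pow_le_pow_left₀ (norm_nonneg z) hzu _
              _ = t' := ht'u.symm
          have heqz := hG z
          rw [Finset.sum_range_succ] at heqz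
          have hmain : ‖(a d).eval z‖ * ‖f w‖ ≤ (d : ℝ) * (Csum * u ^ N * A t') := by
            rw [← norm_mul]
            have hneg : (a d).eval z * f (z ^ k ^ d) =
                - ∑ j ∈ Finset.range d, (a j).eval z * f (z ^ k ^ j) :=
              eq_neg_of_add_eq_zero_right heqz
            rw [hz] at hneg
            rw [hneg, norm_neg]
            calc ‖∑ j ∈ Finset.range d, (a j).eval z * f (z ^ k ^ j)‖
                ≤ ∑ j ∈ Finset.range d, ‖(a j).eval z * f (z ^ k ^ j)‖ := norm_sum_le _ _
              _ ≤ ∑ j ∈ Finset.range d, Csum * ‖z‖ ^ N * A t' := by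
                  apply Finset.sum_le_sum
                  intro j hj
                  rw [norm_mul]
                  have h1 := hup j (by simp only [Finset.mem_range] at hj ⊢; omega) z hz1
                  exact mul_le_mul h1 (hfj j hj) (norm_nonneg _)
                    (mul_nonneg hCsum_nonneg (pow_nonneg (norm_nonneg z) N))
              _ = (d:ℝ) * (Csum * ‖z‖ ^ N * A t') := by
                  rw [Finset.sum_const, Finset.card_range, nsmul_eq_mul]
              _ ≤ (d:ℝ) * (Csum * u ^ N * A t') := by
                  apply mul_le_mul_of_nonneg_left _ (Nat.cast_nonneg d)
                  apply mul_le_mul_of_nonneg_right _ hAt'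
                  exact mul_le_mul_of_nonneg_left
                    (pow_le_pow_left₀ (norm_nonneg z) hzu N) hCsum_nonneg
          have hclb : c ≤ ‖(a d).eval z‖ := hlb z hzr₀
          have h2 : c * ‖f w‖ ≤ (d:ℝ) * (Csum * u ^ N * A t') :=
            le_trans (mul_le_mul_of_nonneg_right hclb (norm_nonneg _)) hmain
          have huN : u ^ N ≤ t ^ N :=
            pow_le_pow_left₀ (by linarith) (htu ▸ le_self_pow₀ hu1 hkd0) N
          have h3 : ‖f w‖ ≤ ((d:ℝ) * Csum / c) * (u ^ N * A t') := by
            rw [div_mul_eq_mul_div, le_div_iff₀ hc]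
            calc ‖f w‖ * c = c * ‖f w‖ := mul_comm _ _
              _ ≤ (d:ℝ) * (Csum * u ^ N * A t') := h2
              _ = (d:ℝ) * Csum * (u ^ N * A t') := by ring
          have h4 : ((d:ℝ) * Csum / c) ≤ K₁ := le_max_left _ _
          have h5 : (0:ℝ) ≤ u ^ N * A t' :=
            mul_nonneg (pow_nonneg (by linarith) N) hAt'
          calc ‖f w‖ ≤ ((d:ℝ) * Csum / c) * (u ^ N * A t') := h3
            _ ≤ K₁ * (u ^ N * A t') := mul_le_mul_of_nonneg_right h4 h5
            _ ≤ K₁ * (t ^ N * (A t' + 1)) := by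
                apply mul_le_mul_of_nonneg_left _ (by linarith : (0:ℝ) ≤ K₁)
                calc u ^ N * A t' ≤ t ^ N * A t' :=
                    mul_le_mul_of_nonneg_right huN hAt'
                  _ ≤ t ^ N * (A t' + 1) :=
                    mul_le_mul_of_nonneg_left (by linarith)
                      (pow_nonneg (by linarith) N)
            _ = K₁ * t ^ N * (A t' + 1) := by ring
      have hAt : A t ≤ K₁ * t ^ N * (A t' + 1) := hA_ub t _ (by linarith) hkey
      have hAt'0 : 0 ≤ A t' := hA_nonneg t' (by linarith : (0:ℝ) ≤ t')
      have htN : 1 ≤ t ^ N := one_le_pow₀ ht1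
      have h6a : (1:ℝ) ≤ K₁ * t ^ N := by
        have := mul_le_mul hK₁1 htN zero_le_one (by linarith : (0:ℝ) ≤ K₁)
        simpa using this
      have h6 : (1:ℝ) ≤ K₁ * t ^ N * (A t' + 1) := by
        have := mul_le_mul h6a (by linarith : (1:ℝ) ≤ A t' + 1) zero_le_one (by linarith)
        simpa using this
      rw [hK'_def]
      linarith
    -- iterate the estimate
    set B₀ := A (s₀ ^ k ^ (d - 1)) + 1 with hB₀_def
    have hB₀1 : 1 ≤ B₀ := by
      have := hA_nonneg (s₀ ^ k ^ (d - 1)) (pow_nonneg (by linarith) _)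
      simp only [hB₀_def]; linarith
    have hB₀0 : 0 ≤ B₀ := by linarith
    have hclaim : ∀ n : ℕ,
        A (s₀ ^ k ^ (d - 1 + n)) + 1 ≤ B₀ * K' ^ n * (s₀ ^ k ^ (d - 1 + n)) ^ (2 * N) := by
      intro n
      induction n with
      | zero =>
        simp only [Nat.add_zero, pow_zero, mul_one]
        have h1 : 1 ≤ (s₀ ^ k ^ (d - 1)) ^ (2 * N) := one_le_pow₀ (one_le_pow₀ hs₀1)
        nlinarith
      | succ n ih =>
        have hidx : d - 1 + (n + 1) = d + n := by omega
        rw [hidx]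
        have hs := hstep n
        have hexp : (s₀ ^ k ^ (d - 1 + n)) ^ (2 * N) * (s₀ ^ k ^ (d + n)) ^ N
            ≤ (s₀ ^ k ^ (d + n)) ^ (2 * N) := by
          rw [← pow_mul, ← pow_mul, ← pow_mul, ← pow_add]
          apply pow_le_pow_right₀ hs₀1
          have hkk : k ^ (d + n) = k ^ (d - 1 + n) * k := by
            rw [← pow_succ]; congr 1; omega
          calc k ^ (d - 1 + n) * (2 * N) + k ^ (d + n) * N
              = (k ^ (d - 1 + n) * 2) * N + k ^ (d + n) * N := by ring
            _ ≤ k ^ (d + n) * N + k ^ (d + n) * N := by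
                have h7 : k ^ (d - 1 + n) * 2 ≤ k ^ (d + n) := by
                  rw [hkk]; exact Nat.mul_le_mul_left _ hk
                exact Nat.add_le_add_right (Nat.mul_le_mul_right _ h7) _
            _ = k ^ (d + n) * (2 * N) := by ring
        have hKt0 : (0:ℝ) ≤ K' * (s₀ ^ k ^ (d + n)) ^ N :=
          mul_nonneg hK'0 (pow_nonneg (pow_nonneg (by linarith : (0:ℝ) ≤ s₀) _) _)
        calc A (s₀ ^ k ^ (d + n)) + 1
            ≤ K' * (s₀ ^ k ^ (d + n)) ^ N * (A (s₀ ^ k ^ (d - 1 + n)) + 1) := hs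
          _ ≤ K' * (s₀ ^ k ^ (d + n)) ^ N *
              (B₀ * K' ^ n * (s₀ ^ k ^ (d - 1 + n)) ^ (2 * N)) :=
            mul_le_mul_of_nonneg_left ih hKt0
          _ = B₀ * K' ^ (n + 1) *
              ((s₀ ^ k ^ (d - 1 + n)) ^ (2 * N) * (s₀ ^ k ^ (d + n)) ^ N) := by ring
          _ ≤ B₀ * K' ^ (n + 1) * (s₀ ^ k ^ (d + n)) ^ (2 * N) :=
            mul_le_mul_of_nonneg_left hexp
              (mul_nonneg hB₀0 (pow_nonneg hK'0 _))
    -- conclude via the growth lemma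
    have hmlek : ∀ m : ℕ, m ≤ k ^ (d - 1 + m) := by
      intro m
      calc m ≤ k ^ m := (Nat.lt_pow_self hk1 : m < k ^ m).le
        _ ≤ k ^ (d - 1 + m) := Nat.pow_le_pow_right (by omega) (by omega)
    have hR1 : ∀ m : ℕ, 1 ≤ s₀ ^ k ^ (d - 1 + m) := fun m => one_le_pow₀ hs₀1
    have hRtop : Tendsto (fun m : ℕ => s₀ ^ k ^ (d - 1 + m)) atTop atTop := by
      apply tendsto_atTop_mono _ (tendsto_pow_atTop_atTop_of_one_lt (by norm_num : (1:ℝ) < 2))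
      intro m
      calc (2:ℝ) ^ m ≤ 2 ^ k ^ (d - 1 + m) :=
          pow_le_pow_right₀ one_le_two (hmlek m)
        _ ≤ s₀ ^ k ^ (d - 1 + m) := pow_le_pow_left₀ (by norm_num) hs₀2 _
    have hbound : ∀ m : ℕ, ∀ w : ℂ, ‖w‖ ≤ s₀ ^ k ^ (d - 1 + m) →
        ‖f w‖ ≤ B₀ * (s₀ ^ k ^ (d - 1 + m)) ^ (2 * N + 1) := by
      intro m w hw
      have h1 : ‖f w‖ ≤ A (s₀ ^ k ^ (d - 1 + m)) := hA_le _ _ hw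
      have h2 := hclaim m
      have hK'm : K' ^ m ≤ s₀ ^ k ^ (d - 1 + m) := by
        calc K' ^ m ≤ s₀ ^ m := pow_le_pow_left₀ hK'0 hs₀K m
          _ ≤ s₀ ^ k ^ (d - 1 + m) := pow_le_pow_right₀ hs₀1 (hmlek m)
      have hRm0 : (0:ℝ) ≤ s₀ ^ k ^ (d - 1 + m) := pow_nonneg (by linarith) _
      have h3 : B₀ * K' ^ m * (s₀ ^ k ^ (d - 1 + m)) ^ (2 * N)
          ≤ B₀ * (s₀ ^ k ^ (d - 1 + m)) ^ (2 * N + 1) := by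
        rw [pow_succ]
        calc B₀ * K' ^ m * (s₀ ^ k ^ (d - 1 + m)) ^ (2 * N)
            ≤ B₀ * s₀ ^ k ^ (d - 1 + m) * (s₀ ^ k ^ (d - 1 + m)) ^ (2 * N) :=
            mul_le_mul_of_nonneg_right (mul_le_mul_of_nonneg_left hK'm hB₀0)
              (pow_nonneg hRm0 _)
          _ = B₀ * ((s₀ ^ k ^ (d - 1 + m)) ^ (2 * N) * s₀ ^ k ^ (d - 1 + m)) := by ring
      linarith
    exact entire_poly_of_growth hf hR1 hRtop hbound
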